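/- arXiv:2006.03530 — 2 statements merged into one kernel-verified Lean document; each statement's English description precedes it below -/
import Mathlib

section
/- Let H be an n×n positive definite Hermitian matrix with eigenvalues in [1/κ, 1] for κ ≥ 1. Then ln(det(H)) = −∑_{k=1}^∞ tr((I−H)^k)/k, and for any m ≥ κ·ln(2nκ/ε) with ε > 0, the truncation satisfies 0 ≤ −∑_{k=1}^m tr((I−H)^k)/k − ln(det(H)) ≤ ε/2. -/
open scoped ComplexOrder

lemma conj_pow_aux {n : ℕ} (U M : Matrix (Fin n) (Fin n) ℂ)
    (h1 : U * star U = 1) (h2 : star U * U = 1) (k : ℕ) :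
    (U * M * star U) ^ k = U * M ^ k * star U := by
  induction k with
  | zero => simp [h1]
  | succ k ih =>
      rw [pow_succ, pow_succ, ih]
      simp only [← mul_assoc]
      rw [mul_assoc (U * M ^ k) (star U) U, h2, mul_one]

lemma trace_pow_eq {n : ℕ} (H : Matrix (Fin n) (Fin n) ℂ) (hH : H.PosDef) (k : ℕ) :
    ((1 - H) ^ k).trace.re = ∑ i, (1 - hH.1.eigenvalues i) ^ k := by
  have hU1 : (hH.1.eigenvectorUnitary : Matrix (Fin n) (Fin n) ℂ)
      * star (hH.1.eigenvectorUnitary : Matrix (Fin n) (Fin n) ℂ) = 1 :=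
    Matrix.mem_unitaryGroup_iff.mp (hH.1.eigenvectorUnitary).2
  have hU2 : star (hH.1.eigenvectorUnitary : Matrix (Fin n) (Fin n) ℂ)
      * (hH.1.eigenvectorUnitary : Matrix (Fin n) (Fin n) ℂ) = 1 :=
    Matrix.mem_unitaryGroup_iff'.mp (hH.1.eigenvectorUnitary).2
  have hspec := hH.1.spectral_theorem
  set U : Matrix (Fin n) (Fin n) ℂ := (hH.1.eigenvectorUnitary : Matrix (Fin n) (Fin n) ℂ)
  have hD : Matrix.diagonal (fun i => (((1 - hH.1.eigenvalues i : ℝ)) : ℂ))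
      = 1 - Matrix.diagonal (RCLike.ofReal ∘ hH.1.eigenvalues) := by
    rw [← Matrix.diagonal_one, Matrix.diagonal_sub]
    congr 1
    ext i
    push_cast
    rfl
  have h1H : 1 - H = U * Matrix.diagonal (fun i => (((1 - hH.1.eigenvalues i : ℝ)) : ℂ)) * star U := by
    rw [hD, Matrix.mul_sub, Matrix.sub_mul, mul_one, hU1]
    exact congrArg (fun X => 1 - X) hspec
  rw [h1H, conj_pow_aux _ _ hU1 hU2, Matrix.trace_mul_cycle, hU2, one_mul,
    Matrix.diagonal_pow, Matrix.trace_diagonal]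
  have h3 : ∑ i, ((1 - hH.1.eigenvalues i : ℝ) : ℂ)^k
      = ((∑ i, (1 - hH.1.eigenvalues i)^k : ℝ) : ℂ) := by push_cast; rfl
  simp only [Pi.pow_apply]
  rw [h3, Complex.ofReal_re]

theorem stmt3 {n : ℕ} (H : Matrix (Fin n) (Fin n) ℂ) (hH : H.PosDef)
    (κ ε : ℝ) (hκ : 1 ≤ κ) (hε : 0 < ε)
    (h1 : ∀ i, hH.1.eigenvalues i ≤ 1)
    (h2 : ∀ i, 1 / κ ≤ hH.1.eigenvalues i) :
    Real.log (H.det.re)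
      = -∑' k : ℕ, ((1 - H) ^ (k + 1)).trace.re / ((k : ℝ) + 1) ∧
    ∀ m : ℕ, κ * Real.log (2 * n * κ / ε) ≤ (m : ℝ) →
      0 ≤ -(∑ k ∈ Finset.range m, ((1 - H) ^ (k + 1)).trace.re / ((k : ℝ) + 1))
            - Real.log (H.det.re) ∧
      -(∑ k ∈ Finset.range m, ((1 - H) ^ (k + 1)).trace.re / ((k : ℝ) + 1))
            - Real.log (H.det.re) ≤ ε / 2 := by
  have hκ0 : (0:ℝ) < κ := lt_of_lt_of_le one_pos hκ
  set lam : Fin n → ℝ := hH.1.eigenvalues with hlam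
  have hpos : ∀ i, 0 < lam i := fun i => hH.eigenvalues_pos i
  have hr0 : ∀ i, 0 ≤ 1 - lam i := fun i => by linarith [h1 i]
  have hrk : ∀ i, 1 - lam i ≤ 1 - 1/κ := fun i => by linarith [h2 i]
  have hr1 : ∀ i, 1 - lam i < 1 := fun i => by linarith [hpos i]
  have hx : ∀ i, |1 - lam i| < 1 := fun i => by
    rw [abs_lt]; constructor
    · linarith [h1 i]
    · exact hr1 i
  set a : Fin n → ℕ → ℝ := fun i k => (1 - lam i)^(k+1)/((k:ℝ)+1) with ha
  have ha_nonneg : ∀ i k, 0 ≤ a i k := fun i k => by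
    apply div_nonneg (pow_nonneg (hr0 i) _)
    positivity
  have hHS : ∀ i, HasSum (a i) (-Real.log (lam i)) := fun i => by
    simpa [ha] using Real.hasSum_pow_div_log_of_abs_lt_one (hx i)
  set f : ℕ → ℝ := fun k => ∑ i, a i k with hf
  have hF : HasSum f (∑ i, -Real.log (lam i)) := hasSum_sum fun i _ => hHS i
  have htr : ∀ k : ℕ, ((1 - H)^(k+1)).trace.re / ((k:ℝ)+1) = f k := fun k => by
    rw [trace_pow_eq H hH (k+1), Finset.sum_div]
  have hdet : H.det.re = ∏ i, lam i := by
    rw [hH.1.det_eq_prod_eigenvalues]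
    have h11 : ∏ i, ((lam i : ℝ) : ℂ) = ((∏ i, lam i : ℝ) : ℂ) := by push_cast; rfl
    rw [show (∏ i, (RCLike.ofReal (hH.1.eigenvalues i) : ℂ)) = ∏ i, ((lam i : ℝ) : ℂ) from rfl,
      h11, Complex.ofReal_re]
  have hlogdet : Real.log (H.det.re) = -(∑ i, -Real.log (lam i)) := by
    rw [hdet, Real.log_prod (fun i _ => (hpos i).ne')]
    simp
  constructor
  · rw [hlogdet, ← hF.tsum_eq, neg_inj]
    exact tsum_congr fun k => (htr k).symm
  · intro m hm
    have hkey : -(∑ k ∈ Finset.range m, ((1 - H)^(k+1)).trace.re / ((k:ℝ)+1))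
        - Real.log (H.det.re) = ∑' j : ℕ, f (j + m) := by
      have hshift := Summable.sum_add_tsum_nat_add m hF.summable
      rw [hlogdet, ← hF.tsum_eq]
      simp only [htr]
      linarith [hshift]
    rw [hkey]
    have hsummable_shift : ∀ i : Fin n, Summable (fun j : ℕ => a i (j + m)) := fun i =>
      (summable_nat_add_iff m).mpr (hHS i).summable
    constructor
    · exact tsum_nonneg fun j => Finset.sum_nonneg fun i _ => ha_nonneg i _
    · have hswap : ∑' j : ℕ, f (j + m) = ∑ i, ∑' j : ℕ, a i (j + m) := by
        simp only [hf]
        exact Summable.tsum_finsetSum fun i _ => hsummable_shift i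
      rw [hswap]
      have htail : ∀ i, ∑' j : ℕ, a i (j + m) ≤ κ * Real.exp (-((m:ℝ)/κ)) := by
        intro i
        set r := 1 - lam i with hrdef
        have hgeo : Summable (fun j : ℕ => r ^ (j + m + 1)) := by
          have : (fun j : ℕ => r ^ (j + m + 1)) = fun j : ℕ => r ^ j * r ^ (m+1) := by
            funext j; rw [← pow_add]; ring_nf
          rw [this]
          exact (summable_geometric_of_lt_one (hr0 i) (hr1 i)).mul_right _
        have hle : ∑' j : ℕ, a i (j + m) ≤ ∑' j : ℕ, r ^ (j + m + 1) := by
          apply Summable.tsum_le_tsum _ (hsummable_shift i) hgeo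
          intro j
          simp only [ha]
          apply div_le_self (pow_nonneg (hr0 i) _)
          have : (0:ℝ) ≤ (j + m : ℕ) := Nat.cast_nonneg _
          push_cast
          linarith
        have hgeoval : ∑' j : ℕ, r ^ (j + m + 1) = (1 - r)⁻¹ * r ^ (m+1) := by
          have h4 : (fun j : ℕ => r ^ (j + m + 1)) = fun j : ℕ => r ^ j * r ^ (m+1) := by
            funext j; rw [← pow_add]; ring_nf
          rw [h4, tsum_mul_right, tsum_geometric_of_lt_one (hr0 i) (hr1 i)]
        have hinv : (1 - r)⁻¹ ≤ κ := by
          have h5 : 1/(lam i) ≤ 1/(1/κ) := one_div_le_one_div_of_le (by positivity) (h2 i)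
          rw [one_div_one_div] at h5
          rw [hrdef, sub_sub_cancel, ← one_div]
          exact h5
        have hexp : r ^ (m+1) ≤ Real.exp (-((m:ℝ)/κ)) := by
          have h6 : r ^ (m+1) ≤ r ^ m :=
            pow_le_pow_of_le_one (hr0 i) (le_of_lt (hr1 i)) (Nat.le_succ m)
          have h7 : r ^ m ≤ (1 - 1/κ) ^ m := pow_le_pow_left₀ (hr0 i) (hrk i) m
          have h8 : (1 - 1/κ : ℝ) ≤ Real.exp (-(1/κ)) := by
            have := Real.add_one_le_exp (-(1/κ))
            linarith
          have h9 : (1 - 1/κ : ℝ) ^ m ≤ (Real.exp (-(1/κ))) ^ m := by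
            apply pow_le_pow_left₀ _ h8
            have : 1/κ ≤ 1 := by
              rw [div_le_one hκ0]; exact hκ
            linarith
          have h10 : (Real.exp (-(1/κ))) ^ m = Real.exp (-((m:ℝ)/κ)) := by
            rw [← Real.exp_nat_mul]
            congr 1
            field_simp
          linarith
        calc ∑' j : ℕ, a i (j + m) ≤ (1 - r)⁻¹ * r ^ (m+1) := by rw [← hgeoval]; exact hle
          _ ≤ κ * Real.exp (-((m:ℝ)/κ)) :=
            mul_le_mul hinv hexp (pow_nonneg (hr0 i) _) (le_of_lt hκ0)
      calc ∑ i, ∑' j : ℕ, a i (j + m) ≤ ∑ _i : Fin n, κ * Real.exp (-((m:ℝ)/κ)) :=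
            Finset.sum_le_sum fun i _ => htail i
        _ = (n:ℝ) * (κ * Real.exp (-((m:ℝ)/κ))) := by
            rw [Finset.sum_const, Finset.card_univ, Fintype.card_fin, nsmul_eq_mul]
        _ ≤ ε / 2 := by
            rcases Nat.eq_zero_or_pos n with hn | hn
            · subst hn; simp; positivity
            · have hn0 : (0:ℝ) < n := by exact_mod_cast hn
              have hq : (0:ℝ) < 2 * n * κ / ε := by positivity
              have h7 : Real.log (2 * n * κ / ε) ≤ (m:ℝ)/κ := by
                rw [le_div_iff₀ hκ0]
                linarith [hm]
              have h8 : Real.exp (-((m:ℝ)/κ)) ≤ ε / (2 * n * κ) := by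
                rw [show ε / (2 * n * κ) = (2 * n * κ / ε)⁻¹ by rw [inv_div]]
                rw [← Real.exp_log hq, ← Real.exp_neg, Real.exp_le_exp]
                linarith
              have h9 : (n:ℝ) * (κ * Real.exp (-((m:ℝ)/κ))) ≤ (n:ℝ) * (κ * (ε / (2 * n * κ))) := by
                apply mul_le_mul_of_nonneg_left _ (le_of_lt hn0)
                exact mul_le_mul_of_nonneg_left h8 (le_of_lt hκ0)
              have h10 : (n:ℝ) * (κ * (ε / (2 * n * κ))) = ε / 2 := by
                field_simp
              linarith
end

section
/- Let A be an invertible n×n complex matrix with singular values σ₁(A) ≤ 1 and σₙ(A) ≥ 1/κ for κ ≥ 1. Define the 2n×2n Hermitian matrix Ĥ = (1/3)·[[A†A, −A†],[−A, 2I]]. Then Ĥ is positive definite, its inverse is Ĥ^{-1} = 3·[[2(A†A)^{-1}, A^{-1}],[(A†)^{-1}, I]], its largest eigenvalue is at most 1, and its smallest eigenvalue is at least (3κ)^{-2}. In particular, Ĥ^{-1}[s, n+t] = 3·A^{-1}[s,t] for all s, t ∈ [n]. -/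
open Matrix
open scoped ComplexOrder

open scoped Matrix.Norms.L2Operator

lemma dot_eq_norm {m : Type*} [Fintype m] (v : m → ℂ) :
    star v ⬝ᵥ v = ((‖(EuclideanSpace.equiv m ℂ).symm v‖ ^ 2 : ℝ) : ℂ) := by
  rw [dotProduct_comm, ← EuclideanSpace.inner_toLp_toLp, inner_self_eq_norm_sq_to_K]
  push_cast
  rfl

lemma quad {m k : Type*} [Fintype m] [Fintype k] (A : Matrix m k ℂ) (x : k → ℂ) :
    star x ⬝ᵥ ((Aᴴ * A) *ᵥ x) = star (A *ᵥ x) ⬝ᵥ (A *ᵥ x) := by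
  rw [star_mulVec, dotProduct_mulVec, ← vecMul_vecMul, ← dotProduct_mulVec]

lemma psd_one_sub {n : ℕ} (A : Matrix (Fin n) (Fin n) ℂ) (hnorm : ‖A‖ ≤ 1) :
    ((1 : Matrix (Fin n) (Fin n) ℂ) - Aᴴ * A).PosSemidef := by
  rw [posSemidef_iff_dotProduct_mulVec]
  constructor
  · exact isHermitian_one.sub (isHermitian_conjTranspose_mul_self A)
  · intro x
    rw [sub_mulVec, dotProduct_sub, one_mulVec, quad, dot_eq_norm, dot_eq_norm,
      ← Complex.ofReal_sub, Complex.zero_le_real, sub_nonneg]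
    have h1 : ‖(EuclideanSpace.equiv (Fin n) ℂ).symm (A *ᵥ x)‖ ≤
        ‖A‖ * ‖(EuclideanSpace.equiv (Fin n) ℂ).symm x‖ :=
      A.l2_opNorm_mulVec ((EuclideanSpace.equiv (Fin n) ℂ).symm x)
    have h2 : (0:ℝ) ≤ ‖(EuclideanSpace.equiv (Fin n) ℂ).symm x‖ := norm_nonneg _
    have h3 : (0:ℝ) ≤ ‖(EuclideanSpace.equiv (Fin n) ℂ).symm (A *ᵥ x)‖ := norm_nonneg _
    have h5 : ‖(EuclideanSpace.equiv (Fin n) ℂ).symm (A *ᵥ x)‖ ≤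
        ‖(EuclideanSpace.equiv (Fin n) ℂ).symm x‖ :=
      h1.trans (by nlinarith)
    exact pow_le_pow_left₀ h3 h5 2

lemma psd_sub_smul {n : ℕ} (A : Matrix (Fin n) (Fin n) ℂ) (hA : IsUnit A)
    (κ : ℝ) (hκ : 1 ≤ κ) (hinv : ‖A⁻¹‖ ≤ κ) :
    (Aᴴ * A - (((κ ^ 2)⁻¹ : ℝ) : ℂ) • (1 : Matrix (Fin n) (Fin n) ℂ)).PosSemidef := by
  have hκ0 : (0:ℝ) < κ := lt_of_lt_of_le one_pos hκ
  rw [posSemidef_iff_dotProduct_mulVec]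
  constructor
  · refine (isHermitian_conjTranspose_mul_self A).sub ?_
    unfold Matrix.IsHermitian
    rw [conjTranspose_smul, conjTranspose_one, Complex.star_def, Complex.conj_ofReal]
  · intro x
    rw [sub_mulVec, dotProduct_sub, smul_mulVec, one_mulVec, dotProduct_smul, quad,
      dot_eq_norm, dot_eq_norm, smul_eq_mul, ← Complex.ofReal_mul, ← Complex.ofReal_sub,
      Complex.zero_le_real, sub_nonneg]
    have key : A⁻¹ *ᵥ (A *ᵥ x) = x := by
      rw [mulVec_mulVec, nonsing_inv_mul A ((isUnit_iff_isUnit_det A).mp hA), one_mulVec]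
    have h1 : ‖(EuclideanSpace.equiv (Fin n) ℂ).symm x‖ ≤
        ‖A⁻¹‖ * ‖(EuclideanSpace.equiv (Fin n) ℂ).symm (A *ᵥ x)‖ := by
      have := (A⁻¹).l2_opNorm_mulVec ((EuclideanSpace.equiv (Fin n) ℂ).symm (A *ᵥ x))
      rwa [show (EuclideanSpace.equiv (Fin n) ℂ).symm (A⁻¹ *ᵥ ((EuclideanSpace.equiv (Fin n) ℂ).symm (A *ᵥ x)))
        = (EuclideanSpace.equiv (Fin n) ℂ).symm x from congrArg _ key] at this
    have h2 : (0:ℝ) ≤ ‖(EuclideanSpace.equiv (Fin n) ℂ).symm x‖ := norm_nonneg _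
    have h3 : (0:ℝ) ≤ ‖(EuclideanSpace.equiv (Fin n) ℂ).symm (A *ᵥ x)‖ := norm_nonneg _
    have h4 : ‖(EuclideanSpace.equiv (Fin n) ℂ).symm x‖ ≤
        κ * ‖(EuclideanSpace.equiv (Fin n) ℂ).symm (A *ᵥ x)‖ :=
      h1.trans (mul_le_mul_of_nonneg_right hinv h3)
    rw [inv_mul_le_iff₀ (by positivity)]
    nlinarith

lemma psd_real_smul {m : Type*} [Fintype m] (c : ℝ) (hc : 0 ≤ c)
    {M : Matrix m m ℂ} (hM : M.PosSemidef) : (((c : ℝ) : ℂ) • M).PosSemidef := by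
  rw [posSemidef_iff_dotProduct_mulVec]
  constructor
  · unfold Matrix.IsHermitian
    rw [conjTranspose_smul, hM.1, Complex.star_def, Complex.conj_ofReal]
  · intro x
    rw [smul_mulVec, dotProduct_smul, smul_eq_mul]
    exact mul_nonneg (by exact_mod_cast hc) ((posSemidef_iff_dotProduct_mulVec.mp hM).2 x)

lemma posdef_smul_one {m : Type*} [Fintype m] [DecidableEq m] (c : ℝ) (hc : 0 < c) :
    (((c : ℝ) : ℂ) • (1 : Matrix m m ℂ)).PosDef := by
  rw [smul_one_eq_diagonal, posDef_diagonal_iff]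
  intro i
  exact_mod_cast hc

lemma inv_smul_one {m : Type*} [Fintype m] [DecidableEq m] (c : ℝ) (hc : c ≠ 0) :
    (((c : ℝ) : ℂ) • (1 : Matrix m m ℂ))⁻¹ = ((c⁻¹ : ℝ) : ℂ) • 1 := by
  apply inv_eq_right_inv
  rw [smul_mul_smul_comm, one_mul, ← Complex.ofReal_mul, mul_inv_cancel₀ hc]
  simp

noncomputable def invertible_smul_one {m : Type*} [Fintype m] [DecidableEq m] (c : ℝ)
    (hc : c ≠ 0) : Invertible (((c : ℝ) : ℂ) • (1 : Matrix m m ℂ)) := by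
  refine ⟨((c⁻¹ : ℝ) : ℂ) • 1, ?_, ?_⟩ <;>
  · rw [smul_mul_smul_comm, one_mul, ← Complex.ofReal_mul]
    first
      | rw [inv_mul_cancel₀ hc]
      | rw [mul_inv_cancel₀ hc]
    simp

theorem stmt9 {n : ℕ} (A : Matrix (Fin n) (Fin n) ℂ) (hA : IsUnit A)
    (κ : ℝ) (hκ : 1 ≤ κ) (hnorm : ‖A‖ ≤ 1) (hinv : ‖A⁻¹‖ ≤ κ)
    (Hhat : Matrix (Fin n ⊕ Fin n) (Fin n ⊕ Fin n) ℂ)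
    (hH : Hhat = (3 : ℂ)⁻¹ •
      Matrix.fromBlocks (Aᴴ * A) (-Aᴴ) (-A) ((2 : ℂ) • 1)) :
    Hhat.PosDef ∧
    Hhat⁻¹ = (3 : ℂ) •
      Matrix.fromBlocks ((2 : ℂ) • (Aᴴ * A)⁻¹) A⁻¹ (Aᴴ)⁻¹ 1 ∧
    (∀ (h : Hhat.IsHermitian) (i : Fin n ⊕ Fin n),
      h.eigenvalues i ≤ 1 ∧ ((3 * κ)⁻¹) ^ 2 ≤ h.eigenvalues i) ∧
    ∀ s t : Fin n, Hhat⁻¹ (Sum.inl s) (Sum.inr t) = 3 * A⁻¹ s t := by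
  have hκ0 : (0:ℝ) < κ := lt_of_lt_of_le one_pos hκ
  -- basic invertibility facts
  have hdet : IsUnit A.det := (isUnit_iff_isUnit_det A).mp hA
  have h1 : A * A⁻¹ = 1 := mul_nonsing_inv A hdet
  have h2 : A⁻¹ * A = 1 := nonsing_inv_mul A hdet
  have hdetH : IsUnit (Aᴴ).det := by rw [det_conjTranspose]; exact hdet.star
  have h3 : Aᴴ * (Aᴴ)⁻¹ = 1 := mul_nonsing_inv _ hdetH
  have h4 : (Aᴴ)⁻¹ * Aᴴ = 1 := nonsing_inv_mul _ hdetH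
  have h5 : (Aᴴ * A)⁻¹ = A⁻¹ * (Aᴴ)⁻¹ := mul_inv_rev _ _
  have hP : (Aᴴ * A) * (Aᴴ * A)⁻¹ = 1 := by
    apply mul_nonsing_inv
    rw [det_mul]
    exact (hdetH.mul hdet)
  -- the inverse formula
  have hright : Hhat * ((3 : ℂ) •
      Matrix.fromBlocks ((2 : ℂ) • (Aᴴ * A)⁻¹) A⁻¹ (Aᴴ)⁻¹ 1) = 1 := by
    rw [hH, smul_mul_smul_comm, inv_mul_cancel₀ (by norm_num : (3:ℂ) ≠ 0), one_smul,
      fromBlocks_multiply]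
    have e11 : (Aᴴ * A) * ((2 : ℂ) • (Aᴴ * A)⁻¹) + (-Aᴴ) * (Aᴴ)⁻¹ = 1 := by
      rw [Matrix.mul_smul, hP, neg_mul, h3, two_smul]
      abel
    have e12 : (Aᴴ * A) * A⁻¹ + (-Aᴴ) * 1 = 0 := by
      rw [Matrix.mul_assoc, h1, Matrix.mul_one, Matrix.mul_one]
      abel
    have e21 : (-A) * ((2 : ℂ) • (Aᴴ * A)⁻¹) + ((2 : ℂ) • 1) * (Aᴴ)⁻¹ = 0 := by
      rw [h5, Matrix.mul_smul, neg_mul, ← Matrix.mul_assoc, h1, Matrix.one_mul,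
        Matrix.smul_mul, Matrix.one_mul]
      module
    have e22 : (-A) * A⁻¹ + ((2 : ℂ) • 1) * 1 = 1 := by
      rw [neg_mul, h1, Matrix.mul_one, two_smul]
      abel
    rw [e11, e12, e21, e22, fromBlocks_one]
  have hinvH : Hhat⁻¹ = (3 : ℂ) •
      Matrix.fromBlocks ((2 : ℂ) • (Aᴴ * A)⁻¹) A⁻¹ (Aᴴ)⁻¹ 1 := inv_eq_right_inv hright
  -- constants
  set c : ℝ := ((3 * κ)⁻¹) ^ 2 with hc
  have hcpos : 0 < c := by positivity
  have hc9 : c ≤ 1/9 := by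
    rw [hc]
    have h1κ : (3:ℝ) ≤ 3 * κ := by linarith
    have h2κ : (3 * κ)⁻¹ ≤ 3⁻¹ := by
      rw [inv_le_inv₀ (by linarith) (by norm_num)]
      exact h1κ
    have h3κ : (0:ℝ) ≤ (3 * κ)⁻¹ := by positivity
    nlinarith
  set r : ℝ := 2/3 - c with hrdef
  have hr : (0:ℝ) < r := by rw [hrdef]; linarith
  -- decomposition of Hhat - c • 1
  haveI := invertible_smul_one (m := Fin n) r hr.ne'
  have hD : (((r : ℝ) : ℂ) • (1 : Matrix (Fin n) (Fin n) ℂ)).PosDef :=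
    posdef_smul_one _ hr
  have hdecomp2 : Hhat - ((c:ℝ):ℂ) • 1 =
      fromBlocks ((3:ℂ)⁻¹ • (Aᴴ*A) - ((c:ℝ):ℂ) • 1) (-((3:ℂ)⁻¹ • Aᴴ))
        (-((3:ℂ)⁻¹ • Aᴴ))ᴴ (((r : ℝ) : ℂ) • 1) := by
    rw [hH, show (1 : Matrix (Fin n ⊕ Fin n) (Fin n ⊕ Fin n) ℂ) = fromBlocks 1 0 0 1 from
      fromBlocks_one.symm, fromBlocks_smul, fromBlocks_smul, sub_eq_add_neg, fromBlocks_neg,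
      fromBlocks_add, fromBlocks_inj]
    refine ⟨by module, by module, ?_, ?_⟩
    · simp only [conjTranspose_neg, conjTranspose_smul, conjTranspose_conjTranspose]
      rw [show star ((3:ℂ)⁻¹) = (3:ℂ)⁻¹ by simp]
      module
    · match_scalars
      push_cast [hrdef]
      ring
  set α : ℝ := 1/3 - (9 * r)⁻¹ with hα
  set β : ℝ := α * (κ^2)⁻¹ - c with hβ
  have h9r5 : (5:ℝ) ≤ 9 * r := by rw [hrdef]; linarith
  have h9rinv : (9 * r)⁻¹ ≤ 5⁻¹ := by
    rw [inv_le_inv₀ (by linarith) (by norm_num)]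
    exact h9r5
  have h9rpos : (0:ℝ) ≤ (9 * r)⁻¹ := by positivity
  have hαnn : 0 ≤ α := by rw [hα]; linarith
  have h19 : (1/9:ℝ) ≤ α := by rw [hα]; linarith
  have hceq : c = (κ^2)⁻¹ * (1/9) := by
    rw [hc]
    field_simp
    ring
  have hβnn : 0 ≤ β := by
    have key : (0:ℝ) ≤ (κ^2)⁻¹ * (α - 1/9) :=
      mul_nonneg (by positivity) (by linarith)
    rw [hβ, hceq]
    nlinarith [key]
  have psd2 : (Hhat - ((c:ℝ):ℂ) • 1).PosSemidef := by
    rw [hdecomp2, PosDef.fromBlocks₂₂ _ _ hD, inv_smul_one _ hr.ne']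
    have hschur : (3:ℂ)⁻¹ • (Aᴴ*A) - ((c:ℝ):ℂ) • 1 -
        (-((3:ℂ)⁻¹ • Aᴴ)) * ((((r:ℝ)⁻¹ : ℝ) : ℂ) • 1) * (-((3:ℂ)⁻¹ • Aᴴ))ᴴ =
        ((α:ℝ):ℂ) • (Aᴴ*A - (((κ ^ 2)⁻¹ : ℝ) : ℂ) • 1) + ((β:ℝ):ℂ) • 1 := by
      simp only [conjTranspose_neg, conjTranspose_smul, conjTranspose_conjTranspose,
        neg_mul, mul_neg, neg_neg, Matrix.smul_mul, Matrix.mul_smul, Matrix.mul_one,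
        smul_smul]
      rw [show star ((3:ℂ)⁻¹) = (3:ℂ)⁻¹ by simp]
      match_scalars <;> push_cast [hβ, hα] <;> ring
    rw [hschur]
    exact (psd_real_smul α hαnn (psd_sub_smul A hA κ hκ hinv)).add
      (psd_real_smul β hβnn .one)
  -- decomposition of 1 - Hhat
  set d : ℝ := 3⁻¹ with hd
  have hdpos : (0:ℝ) < d := by rw [hd]; norm_num
  haveI := invertible_smul_one (m := Fin n) d hdpos.ne'
  have hD1 : (((d:ℝ) : ℂ) • (1 : Matrix (Fin n) (Fin n) ℂ)).PosDef :=
    posdef_smul_one _ hdpos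
  have hdecomp1 : (1 : Matrix (Fin n ⊕ Fin n) (Fin n ⊕ Fin n) ℂ) - Hhat =
      fromBlocks (1 - (3:ℂ)⁻¹ • (Aᴴ*A)) ((3:ℂ)⁻¹ • Aᴴ)
        ((3:ℂ)⁻¹ • Aᴴ)ᴴ (((d:ℝ) : ℂ) • 1) := by
    rw [hH, show (1 : Matrix (Fin n ⊕ Fin n) (Fin n ⊕ Fin n) ℂ) = fromBlocks 1 0 0 1 from
      fromBlocks_one.symm, fromBlocks_smul, sub_eq_add_neg, fromBlocks_neg,
      fromBlocks_add, fromBlocks_inj]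
    refine ⟨by module, by module, ?_, ?_⟩
    · simp only [conjTranspose_smul, conjTranspose_conjTranspose]
      rw [show star ((3:ℂ)⁻¹) = (3:ℂ)⁻¹ by simp]
      module
    · match_scalars
      push_cast [hd]
      ring
  have psd1 : ((1 : Matrix (Fin n ⊕ Fin n) (Fin n ⊕ Fin n) ℂ) - Hhat).PosSemidef := by
    rw [hdecomp1, PosDef.fromBlocks₂₂ _ _ hD1, inv_smul_one _ hdpos.ne']
    have hschur : (1 : Matrix (Fin n) (Fin n) ℂ) - (3:ℂ)⁻¹ • (Aᴴ*A) -
        ((3:ℂ)⁻¹ • Aᴴ) * ((((d:ℝ)⁻¹ : ℝ) : ℂ) • 1) * ((3:ℂ)⁻¹ • Aᴴ)ᴴ =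
        (((2/3 : ℝ)):ℂ) • ((1 : Matrix (Fin n) (Fin n) ℂ) - Aᴴ*A) + (((1/3 : ℝ)):ℂ) • 1 := by
      simp only [conjTranspose_smul, conjTranspose_conjTranspose, Matrix.smul_mul,
        Matrix.mul_smul, Matrix.mul_one, smul_smul]
      rw [show star ((3:ℂ)⁻¹) = (3:ℂ)⁻¹ by simp]
      match_scalars <;> push_cast [hd] <;> ring
    rw [hschur]
    exact (psd_real_smul _ (by norm_num) (psd_one_sub A hnorm)).add
      (psd_real_smul _ (by norm_num) .one)
  refine ⟨?_, hinvH, ?_, ?_⟩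
  · have hsplit : Hhat = ((c:ℝ):ℂ) • 1 + (Hhat - ((c:ℝ):ℂ) • 1) := by
      rw [add_sub_cancel]
    rw [hsplit]
    exact (posdef_smul_one c hcpos).add_posSemidef psd2
  · intro h i
    have hev := h.eigenvalues_eq i
    set v : (Fin n ⊕ Fin n) → ℂ := ⇑(h.eigenvectorBasis i) with hv
    have hv1 : star v ⬝ᵥ v = 1 := by
      rw [show star v ⬝ᵥ v =
        (inner ℂ (h.eigenvectorBasis i) (h.eigenvectorBasis i) : ℂ) from dotProduct_comm _ _,
        inner_self_eq_norm_sq_to_K, h.eigenvectorBasis.orthonormal.1 i]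
      norm_num
    constructor
    · have hq := psd1.re_dotProduct_nonneg v
      rw [sub_mulVec, one_mulVec, dotProduct_sub, map_sub, hv1] at hq
      simp only [RCLike.re_to_complex, Complex.one_re] at hq
      rw [hev]
      simp only [RCLike.re_to_complex]
      linarith
    · have hq := psd2.re_dotProduct_nonneg v
      rw [sub_mulVec, smul_mulVec, one_mulVec, dotProduct_sub, dotProduct_smul,
        smul_eq_mul, hv1, mul_one, map_sub] at hq
      simp only [RCLike.re_to_complex, Complex.ofReal_re] at hq
      rw [hev]
      simp only [RCLike.re_to_complex]
      rw [hc] at hq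
      linarith
  · intro s t
    rw [hinvH]
    simp [Matrix.smul_apply, smul_eq_mul]
end
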